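/- Let r, σ, b > 0 and a ∈ ℝ with a < 0, σ = −a·r and r > 1, and let S₊ = (x₁, y₁, z₁) be the nontrivial equilibrium of the Lorenz-like system, where ξ = (σ·b/(2a²))·(a(r−2) − σ + √((σ − a·r)² + 4aσ)), x₁ = σ·b·√ξ/(σ·b + a·ξ), y₁ = √ξ, z₁ = σ·ξ/(σ·b + a·ξ). Then every complex root of the characteristic polynomial of the Jacobian matrix J(x₁, y₁, z₁) has negative real part if and only if one of the following holds: (i) 0 ≤ a·r + 1 < 2r/(r − √(r(r−1))), or (ii) a·r + 1 < 0 and b > (4a(r−1)(a·r+1)·√(r(r−1)) + (a·r − 1)³)/((a·r + 1)² − 4a·r²). -/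

import Mathlib

open Polynomial

private lemma corePair (p q s α x y : ℝ) (h1 : α + 2*x = -p)
    (h2 : 2*α*x + x^2 + y^2 = q) (h3 : α*(x^2+y^2) = -s) :
    (α < 0 ∧ x < 0) ↔ (0 < p ∧ 0 < s ∧ s < p*q) := by
  have key : p*q - s = -2*x*((α+x)^2 + y^2) := by
    linear_combination q*h1 + (2*x+α)*h2 - h3
  constructor
  · rintro ⟨hα, hx⟩
    have hx2 : 0 < x^2 + y^2 := by nlinarith [mul_pos (neg_pos.2 hx) (neg_pos.2 hx), sq_nonneg y]
    refine ⟨by linarith, ?_, ?_⟩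
    · nlinarith [mul_pos (neg_pos.2 hα) hx2]
    · nlinarith [mul_pos (neg_pos.2 hx) (show (0:ℝ) < (α+x)^2 + y^2 by
        nlinarith [mul_pos (show (0:ℝ) < -(α+x) by linarith) (show (0:ℝ) < -(α+x) by linarith), sq_nonneg y])]
  · rintro ⟨hp, hs, hpq⟩
    constructor
    · by_contra hc
      push_neg at hc
      nlinarith [mul_nonneg hc (add_nonneg (sq_nonneg x) (sq_nonneg y))]
    · by_contra hc
      push_neg at hc
      nlinarith [mul_nonneg hc (add_nonneg (sq_nonneg (α+x)) (sq_nonneg y))]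

private lemma coreReal (p q s α β γ : ℝ) (h1 : α + β + γ = -p)
    (h2 : α*β + α*γ + β*γ = q) (h3 : α*β*γ = -s) :
    (α < 0 ∧ β < 0 ∧ γ < 0) ↔ (0 < p ∧ 0 < s ∧ s < p*q) := by
  have key : p*q - s = -((α+β)*(α+γ)*(β+γ)) := by
    linear_combination q*h1 + (α+β+γ)*h2 - h3
  constructor
  · rintro ⟨hα, hβ, hγ⟩
    refine ⟨by linarith, ?_, ?_⟩
    · nlinarith [mul_pos (mul_pos (neg_pos.2 hα) (neg_pos.2 hβ)) (neg_pos.2 hγ)]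
    · nlinarith [mul_pos (mul_pos (show (0:ℝ) < -(α+β) by linarith)
        (show (0:ℝ) < -(α+γ) by linarith)) (show (0:ℝ) < -(β+γ) by linarith)]
  · rintro ⟨hp, hs, hpq⟩
    have hq : 0 < q := by nlinarith
    have hroot : ∀ t : ℝ, t^3 + p*t^2 + q*t + s = 0 → t < 0 := by
      intro t ht
      by_contra hc
      push_neg at hc
      nlinarith [mul_nonneg (mul_nonneg hc hc) hc, mul_nonneg hc hc, mul_pos hp hq]
    exact ⟨hroot α (by linear_combination α^2*h1 - α*h2 + h3),
      hroot β (by linear_combination β^2*h1 - β*h2 + h3),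
      hroot γ (by linear_combination γ^2*h1 - γ*h2 + h3)⟩

private lemma corePairC (p q s : ℝ) (A B C : ℂ) (h1 : A + B + C = -(p:ℂ))
    (h2 : A*B + A*C + B*C = (q:ℂ)) (h3 : A*B*C = -(s:ℂ))
    (hA : A.im = 0) (hBC : C = (starRingEnd ℂ) B) :
    (A.re < 0 ∧ B.re < 0 ∧ C.re < 0) ↔ (0 < p ∧ 0 < s ∧ s < p*q) := by
  subst hBC
  have e1 := congrArg Complex.re h1
  have e2 := congrArg Complex.re h2
  have e3 := congrArg Complex.re h3
  simp [Complex.add_re, Complex.mul_re, Complex.mul_im, Complex.conj_re, Complex.conj_im, hA] at e1 e2 e3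
  have key := corePair p q s A.re B.re B.im (by linarith) (by linear_combination e2)
    (by linear_combination e3)
  rw [Complex.conj_re]
  rw [← key]
  tauto

private lemma coreRealC (p q s : ℝ) (A B C : ℂ) (h1 : A + B + C = -(p:ℂ))
    (h2 : A*B + A*C + B*C = (q:ℂ)) (h3 : A*B*C = -(s:ℂ))
    (hA : A.im = 0) (hB : B.im = 0) (hC : C.im = 0) :
    (A.re < 0 ∧ B.re < 0 ∧ C.re < 0) ↔ (0 < p ∧ 0 < s ∧ s < p*q) := by
  have e1 := congrArg Complex.re h1
  have e2 := congrArg Complex.re h2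
  have e3 := congrArg Complex.re h3
  simp [Complex.add_re, Complex.mul_re, Complex.mul_im, hA, hB, hC] at e1 e2 e3
  exact coreReal p q s A.re B.re C.re (by linarith) (by linear_combination e2)
    (by linear_combination e3)


private lemma coreC (p q s : ℝ) (A B C : ℂ) (h1 : A + B + C = -(p:ℂ))
    (h2 : A*B + A*C + B*C = (q:ℂ)) (h3 : A*B*C = -(s:ℂ)) :
    (A.re < 0 ∧ B.re < 0 ∧ C.re < 0) ↔ (0 < p ∧ 0 < s ∧ s < p*q) := by
  have key : ∀ t : ℂ, (t-A)*(t-B)*(t-C) = t^3 + p*t^2 + q*t + s := by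
    intro t; linear_combination (-t^2)*h1 + t*h2 - h3
  have hconj : ∀ z : ℂ, (z-A)*(z-B)*(z-C) = 0 →
      ((starRingEnd ℂ) z - A)*((starRingEnd ℂ) z - B)*((starRingEnd ℂ) z - C) = 0 := by
    intro z hz
    rw [key] at hz ⊢
    have := congrArg (starRingEnd ℂ) hz
    simpa [map_add, map_mul, map_pow, Complex.conj_ofReal] using this
  have him : ∀ z w : ℂ, (starRingEnd ℂ) z = w → w.im = -z.im := by
    intro z w h; rw [← h, Complex.conj_im]
  by_cases hA : A.im = 0
  · by_cases hB : B.im = 0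
    · by_cases hC : C.im = 0
      · exact coreRealC p q s A B C h1 h2 h3 hA hB hC
      · exfalso
        have hr := hconj C (by ring)
        rcases mul_eq_zero.1 hr with h | h
        · rcases mul_eq_zero.1 h with h' | h'
          · exact hC (by have := him C A (sub_eq_zero.1 h'); simp [hA] at this; linarith [this])
          · exact hC (by have := him C B (sub_eq_zero.1 h'); simp [hB] at this; linarith [this])
        · exact hC (by have := him C C (sub_eq_zero.1 h); linarith [this])
    · have hr := hconj B (by ring)
      rcases mul_eq_zero.1 hr with h | h
      · rcases mul_eq_zero.1 h with h' | h'
        · exact absurd (by have := him B A (sub_eq_zero.1 h'); simp [hA] at this; linarith [this]) hB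
        · exact absurd (by have := him B B (sub_eq_zero.1 h'); linarith [this]) hB
      · exact corePairC p q s A B C h1 h2 h3 hA (sub_eq_zero.1 h).symm
  · have hr := hconj A (by ring)
    rcases mul_eq_zero.1 hr with h | h
    · rcases mul_eq_zero.1 h with h' | h'
      · exact absurd (by have := him A A (sub_eq_zero.1 h'); linarith [this]) hA
      · -- conj A = B ; C is real
        have hBA : B = (starRingEnd ℂ) A := (sub_eq_zero.1 h').symm
        have hCim : C.im = 0 := by
          have := congrArg Complex.im h1
          simp [Complex.add_im, hBA, Complex.conj_im] at this
          linarith [this]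
        have := corePairC p q s C A B (by linear_combination h1) (by linear_combination h2)
          (by linear_combination h3) hCim hBA
        rw [← this]; tauto
    · -- conj A = C ; B is real
      have hCA : C = (starRingEnd ℂ) A := (sub_eq_zero.1 h).symm
      have hBim : B.im = 0 := by
        have := congrArg Complex.im h1
        simp [Complex.add_im, hCA, Complex.conj_im] at this
        linarith [this]
      have := corePairC p q s B A C (by linear_combination h1) (by linear_combination h2)
        (by linear_combination h3) hBim hCA
      rw [← this]; tauto

private lemma cubicFactor (P Q S : ℂ) : ∃ A B C : ℂ,
    ∀ t : ℂ, t^3 + P*t^2 + Q*t + S = (t - A)*(t - B)*(t - C) := by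
  set f : ℂ[X] := X^3 + C P * X^2 + C Q * X + C S with hf
  have hdeg : f.natDegree = 3 := by
    rw [hf]; compute_degree!
  have hmonic : f.Monic := by
    rw [hf]; monicity!
  have hsplits : f.Splits := IsAlgClosed.splits f
  have hcard : f.roots.card = 3 := by
    rw [← hdeg]
    exact (Polynomial.splits_iff_card_roots).1 hsplits
  obtain ⟨A, B, C, hroots⟩ := Multiset.card_eq_three.1 hcard
  have hfact : f = (X - Polynomial.C A) * (X - Polynomial.C B) * (X - Polynomial.C C) := by
    have := hsplits.eq_prod_roots_of_monic hmonic
    rw [hroots] at this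
    simpa [Multiset.map_cons, Multiset.prod_cons, mul_assoc] using this
  refine ⟨A, B, C, fun t => ?_⟩
  have := congrArg (Polynomial.eval t) hfact
  simpa [hf] using this

private lemma rhIff (p q s : ℝ) :
    (∀ μ : ℂ, μ^3 + p*μ^2 + q*μ + s = 0 → μ.re < 0) ↔ (0 < p ∧ 0 < s ∧ s < p*q) := by
  obtain ⟨A, B, C, hf⟩ := cubicFactor (p:ℂ) (q:ℂ) (s:ℂ)
  have h3 : A*B*C = -(s:ℂ) := by linear_combination hf 0
  have h1 : A + B + C = -(p:ℂ) := by linear_combination (hf 1)/2 + (hf (-1))/2 - hf 0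
  have h2 : A*B + A*C + B*C = (q:ℂ) := by linear_combination (hf (-1))/2 - (hf 1)/2
  rw [← coreC p q s A B C h1 h2 h3]
  constructor
  · intro h
    exact ⟨h A (by rw [hf]; ring), h B (by rw [hf]; ring), h C (by rw [hf]; ring)⟩
  · rintro ⟨hA, hB, hC⟩ μ hμ
    rw [hf] at hμ
    rcases mul_eq_zero.1 hμ with h | h
    · rcases mul_eq_zero.1 h with h' | h'
      · rw [sub_eq_zero.1 h']; exact hA
      · rw [sub_eq_zero.1 h']; exact hB
    · rw [sub_eq_zero.1 h]; exact hC

open Polynomial Matrix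

private lemma aevalCharpolyFin3 (M : Matrix (Fin 3) (Fin 3) ℝ) (μ : ℂ) :
    (Polynomial.aeval μ) M.charpoly =
      (!![μ - (M 0 0 : ℂ), -(M 0 1 : ℂ), -(M 0 2 : ℂ);
         -(M 1 0 : ℂ), μ - (M 1 1 : ℂ), -(M 1 2 : ℂ);
         -(M 2 0 : ℂ), -(M 2 1 : ℂ), μ - (M 2 2 : ℂ)] : Matrix (Fin 3) (Fin 3) ℂ).det := by
  rw [Polynomial.aeval_def, ← Polynomial.eval_map, ← Matrix.charpoly_map M (algebraMap ℝ ℂ),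
    Matrix.charpoly]
  rw [← Polynomial.coe_evalRingHom, RingHom.map_det]
  congr 1
  ext i j
  fin_cases i <;> fin_cases j <;>
    simp [Matrix.charmatrix_apply_eq, Matrix.charmatrix_apply_ne, Matrix.map_apply,
      Matrix.charmatrix, Matrix.scalar_apply, Matrix.diagonal_apply, Matrix.one_apply] <;>
    rfl

open Polynomial Matrix

set_option maxHeartbeats 1000000 in
/-- Stability criterion for the nontrivial equilibria of the Rabinovich case
(`a < 0`, `σ = −a·r`, `r > 1`) of the Lorenz-like system: all complex roots of
the characteristic polynomial of the Jacobian at `S₊` have negative real part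
iff condition (i) or (ii) of Lemma 2 holds. -/
theorem stmt_10 (r σ b a : ℝ) (hr : 0 < r) (hσ : 0 < σ) (hb : 0 < b)
    (ha : a < 0) (hσar : σ = -a * r) (hr1 : 1 < r) :
    let ξ := σ * b / (2 * a ^ 2) *
      (a * (r - 2) - σ + Real.sqrt ((σ - a * r) ^ 2 + 4 * a * σ))
    let x₁ := σ * b * Real.sqrt ξ / (σ * b + a * ξ)
    let y₁ := Real.sqrt ξ
    let z₁ := σ * ξ / (σ * b + a * ξ)
    let J : Matrix (Fin 3) (Fin 3) ℝ :=
      !![-σ, σ - a * z₁, -a * y₁; r - z₁, -1, -x₁; y₁, x₁, -b]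
    ((∀ μ : ℂ, (Polynomial.aeval μ) (Matrix.charpoly J) = 0 → μ.re < 0) ↔
      ((0 ≤ a * r + 1 ∧
          a * r + 1 < 2 * r / (r - Real.sqrt (r * (r - 1)))) ∨
       (a * r + 1 < 0 ∧
          b > (4 * a * (r - 1) * (a * r + 1) * Real.sqrt (r * (r - 1))
                + (a * r - 1) ^ 3) / ((a * r + 1) ^ 2 - 4 * a * r ^ 2)))) := by
  subst hσar
  intro ξ x₁ y₁ z₁ J
  set k : ℝ := Real.sqrt (r * (r - 1)) with hk
  have hrr1 : (0:ℝ) ≤ r * (r - 1) := by nlinarith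
  have hk2 : k ^ 2 = r * (r - 1) := Real.sq_sqrt hrr1
  have hk0 : 0 < k := Real.sqrt_pos.2 (by nlinarith)
  have hkr : k < r := by nlinarith
  have hkr1 : r - 1 < k := by nlinarith
  have hna : 0 < -a := neg_pos.2 ha
  -- inner sqrt
  have hS : Real.sqrt ((-a * r - a * r) ^ 2 + 4 * a * (-a * r)) = -(2*a) * k := by
    have h1 : (-a * r - a * r) ^ 2 + 4 * a * (-a * r) = (-(2*a) * k)^2 := by
      linear_combination (-4*a^2) * hk2
    rw [h1, Real.sqrt_sq (by nlinarith)]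
  have hξ : ξ = r * b * (k - (r - 1)) := by
    have h0 : ξ = -a * r * b / (2 * a ^ 2) *
        (a * (r - 2) - -a * r + Real.sqrt ((-a * r - a * r) ^ 2 + 4 * a * (-a * r))) := rfl
    rw [h0, hS]
    field_simp [ha.ne]
    ring
  have hξpos : 0 < ξ := by
    rw [hξ]; exact mul_pos (mul_pos hr hb) (by linarith)
  have hy2 : y₁ ^ 2 = r * b * (k - (r - 1)) := by
    have : y₁ ^ 2 = ξ := Real.sq_sqrt hξpos.le
    rw [this, hξ]
  have hden : -a * r * b + a * ξ = a * r * b * (k - r) := by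
    linear_combination a * hξ
  have hdpos : 0 < a * r * b * (k - r) := by
    have h1 : 0 < (-a) * (r - k) := mul_pos hna (by linarith)
    nlinarith [mul_pos (mul_pos hr hb) h1]
  have hz : z₁ = k := by
    have h0 : z₁ = -a * r * ξ / (-a * r * b + a * ξ) := rfl
    rw [h0, hden, div_eq_iff hdpos.ne']
    linear_combination (-(a*r)) * hξ + (-(a*r*b)) * hk2
  have hx : x₁ = y₁ * (r + k) / r := by
    have h0 : x₁ = -a * r * b * y₁ / (-a * r * b + a * ξ) := rfl
    rw [h0, hden, div_eq_div_iff hdpos.ne' hr.ne']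
    linear_combination (-(a*r*b*y₁)) * hk2
  have hxr : x₁ * r = y₁ * (r + k) := by
    rw [hx]; field_simp
  have hJ : J = !![a * r, -a * r - a * k, -a * y₁;
      r - k, -1, -x₁; y₁, x₁, -b] := by
    have h0 : J = !![-(-a * r), -a * r - a * z₁, -a * y₁;
        r - z₁, -1, -x₁; y₁, x₁, -b] := rfl
    rw [h0, hz]
    congr 1
    ring
  have hY2c : ((y₁:ℝ):ℂ)^2 = (r:ℂ)*b*(k - r + 1) := by
    have := congrArg (Complex.ofReal) hy2
    push_cast at this
    linear_combination this
  have hK2c : ((k:ℝ):ℂ)^2 = (r:ℂ)^2 - r := by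
    have := congrArg (Complex.ofReal) hk2
    push_cast at this
    linear_combination this
  have hxc : ((x₁:ℝ):ℂ) * r = ((y₁:ℝ):ℂ) * (r + k) := by
    have := congrArg (Complex.ofReal) hxr
    push_cast at this
    linear_combination this
  have key : ∀ μ : ℂ, (Polynomial.aeval μ) (Matrix.charpoly J) =
      μ^3 + ((1 + b - a*r : ℝ):ℂ)*μ^2 + ((b*((r+k) - a*r*(r-k)) : ℝ):ℂ)*μ
        + ((-(4*a*b*r*(r-1)) : ℝ):ℂ) := by
    intro μ
    rw [hJ, aevalCharpolyFin3, Matrix.det_fin_three]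
    simp
    push_cast
    have hrc : (r:ℂ) ≠ 0 := by exact_mod_cast hr.ne'
    apply mul_left_cancel₀ (pow_ne_zero 2 hrc)
    linear_combination
      ((-(a:ℂ))*y₁*r^2 - 3*(y₁:ℂ)*k*a*r - (x₁:ℂ)*a*r^2 + μ*y₁*r + μ*(y₁:ℂ)*k + μ*(x₁:ℂ)*r) * hxc
      + ((a:ℂ)*r^2 - (a:ℂ)*r^3 - 4*(k:ℂ)*a*r^2 - 3*(k:ℂ)^2*a*r + μ*(r:ℂ)^2 + μ*(a:ℂ)*r^2 + 2*μ*(k:ℂ)*r + μ*(k:ℂ)^2) * hY2c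
      + ((-4:ℂ)*a*b*r^2 - (a:ℂ)*b*r^3 - 3*(k:ℂ)*a*b*r^2 + μ*(b:ℂ)*r + μ*(b:ℂ)*r^2 - μ*(a:ℂ)*r^2 + μ*(k:ℂ)*b*r) * hK2c
  clear_value ξ x₁ y₁ z₁ J
  clear_value k
  simp only [key]
  rw [rhIff (1 + b - a*r) (b*((r+k) - a*r*(r-k))) (-(4*a*b*r*(r-1)))]
  have hp : 0 < 1 + b - a*r := by linarith [mul_pos hna hr]
  have hs : 0 < -(4*a*b*r*(r-1)) := by
    linarith [mul_pos (mul_pos (mul_pos hna hb) hr) (show (0:ℝ) < r - 1 by linarith)]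
  have hApos : 0 < (r+k) - a*r*(r-k) := by
    linarith [mul_pos (mul_pos hna hr) (show (0:ℝ) < r - k by linarith), hk0]
  have hD : 0 < (a*r+1)^2 - 4*a*r^2 := by
    linarith [sq_nonneg (a*r+1), mul_pos (mul_pos hna hr) hr]
  have hAA : ((r+k) - a*r*(r-k)) * (r*(1-a*r) - k*(1+a*r)) = r*((a*r+1)^2 - 4*a*r^2) := by
    linear_combination (-(1+a*r)^2) * hk2
  have hNN : ((a*r-1)*((r+k) - a*r*(r-k)) - 4*a*r*(r-1)) * (r*(1-a*r) - k*(1+a*r))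
      = r*(4*a*(r-1)*(a*r+1)*k + (a*r-1)^3) := by
    linear_combination (a*r-1) * hAA
  have hAA' : b*((((r+k) - a*r*(r-k)))*(r*(1-a*r) - k*(1+a*r)))
      = b*(r*((a*r+1)^2 - 4*a*r^2)) := by rw [hAA]
  constructor
  · rintro ⟨hp', hs', hlt⟩
    by_cases h0 : 0 ≤ a*r + 1
    · left
      refine ⟨h0, ?_⟩
      rw [lt_div_iff₀ (by linarith : (0:ℝ) < r - k)]
      linarith [mul_nonneg (show (0:ℝ) ≤ -(a*r) by linarith [mul_pos hna hr])
        (show (0:ℝ) ≤ r - k by linarith), hk0]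
    · right
      push_neg at h0
      refine ⟨h0, ?_⟩
      rw [gt_iff_lt, div_lt_iff₀ hD]
      have hX : 0 < (1 + b - a*r)*((r+k) - a*r*(r-k)) + 4*a*r*(r-1) := by
        by_contra hc
        push_neg at hc
        linarith [mul_nonneg hb.le (neg_nonneg.2 hc)]
      have hAb : (a*r-1)*((r+k) - a*r*(r-k)) - 4*a*r*(r-1) < b*((r+k) - a*r*(r-k)) := by
        linarith [hX]
      have hCb : 0 < r*(1-a*r) - k*(1+a*r) := by
        linarith [mul_pos hk0 (show (0:ℝ) < -(1+a*r) by linarith),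
          mul_pos (mul_pos hna hr) hr]
      have h6 := mul_lt_mul_of_pos_right hAb hCb
      have h7 : r*(4*a*(r-1)*(a*r+1)*k + (a*r-1)^3) < r*(b*((a*r+1)^2 - 4*a*r^2)) := by
        linarith [h6, hNN, hAA']
      by_contra hc
      push_neg at hc
      have := mul_le_mul_of_nonneg_left hc hr.le
      linarith [h7, this]
  · rintro (⟨h0, -⟩ | ⟨h0, hbgt⟩)
    · have hG : 0 < (1 - a*r)*((r+k) - a*r*(r-k)) + 4*a*r*(r-1) := by
        linarith [mul_nonneg (show (0:ℝ) ≤ k - (r-1) by linarith)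
            (mul_nonneg (show (0:ℝ) ≤ 1 - a*r by linarith [mul_pos hna hr]) h0),
          sq_nonneg (a*r+1),
          mul_nonneg h0 (show (0:ℝ) ≤ r - 1 by linarith),
          mul_pos hna hr]
      refine ⟨hp, hs, ?_⟩
      linarith [mul_pos hb (show 0 < (1 - a*r)*((r+k) - a*r*(r-k)) + 4*a*r*(r-1)
        + b*((r+k) - a*r*(r-k)) by linarith [hG, mul_pos hb hApos])]
    · refine ⟨hp, hs, ?_⟩
      rw [gt_iff_lt, div_lt_iff₀ hD] at hbgt
      have hCb : 0 < r*(1-a*r) - k*(1+a*r) := by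
        linarith [mul_pos hk0 (show (0:ℝ) < -(1+a*r) by linarith),
          mul_pos (mul_pos hna hr) hr]
      have h8 := mul_lt_mul_of_pos_left hbgt hr
      have h7 : ((a*r-1)*((r+k) - a*r*(r-k)) - 4*a*r*(r-1)) * (r*(1-a*r) - k*(1+a*r))
          < (b*((r+k) - a*r*(r-k))) * (r*(1-a*r) - k*(1+a*r)) := by
        linarith [hNN, hAA', h8]
      have h5 : (a*r-1)*((r+k) - a*r*(r-k)) - 4*a*r*(r-1) < b*((r+k) - a*r*(r-k)) := by
        by_contra hc
        push_neg at hc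
        have := mul_le_mul_of_nonneg_right hc hCb.le
        linarith [h7, this]
      linarith [mul_pos hb (show 0 < b*((r+k) - a*r*(r-k))
        - ((a*r-1)*((r+k) - a*r*(r-k)) - 4*a*r*(r-1)) by linarith [h5])]
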